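/- For the fundamental functions ℓ_k of trigonometric interpolation at the equidistant nodes x_k = 2kπ/(2n+1), k = 0,…,2n (i.e., ℓ_k is the trigonometric polynomial of degree ≤ n with ℓ_k(x_j) = δ_{jk}), the identity ∑_{k=0}^{2n} (4ℓ_k(x)³ − 3ℓ_k(x)⁴) = 1 holds for all real x. -/

import Mathlib

open Real

/-- `f` is a real trigonometric polynomial of degree at most `n`. -/
def IsTrigPoly (n : ℕ) (f : ℝ → ℝ) : Prop :=
  ∃ a b : ℕ → ℝ, ∀ x : ℝ,
    f x = a 0 + ∑ m ∈ Finset.Icc 1 n, (a m * Real.cos (m * x) + b m * Real.sin (m * x))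

noncomputable section

namespace TrigAux

def node (n j : ℕ) : ℝ := 2 * (j : ℝ) * π / (2 * (n : ℝ) + 1)

def ee (m : ℤ) (x : ℝ) : ℂ := Complex.exp (m * x * Complex.I)

def S (n : ℕ) : Finset ℤ := Finset.Icc (-(n : ℤ)) n

lemma hNc (n : ℕ) : (2 * (n : ℂ) + 1) ≠ 0 := by
  have : ((2 * n + 1 : ℕ) : ℂ) ≠ 0 := Nat.cast_ne_zero.2 (by omega)
  push_cast at this
  exact this

lemma ee_add (m m' : ℤ) (x : ℝ) : ee (m + m') x = ee m x * ee m' x := by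
  rw [ee, ee, ee, ← Complex.exp_add]; congr 1; push_cast; ring

lemma ee_sub (m : ℤ) (x y : ℝ) : ee m (x - y) = ee m x * ee (-m) y := by
  rw [ee, ee, ee, ← Complex.exp_add]; congr 1; push_cast; ring

lemma ee_zero (x : ℝ) : ee 0 x = 1 := by simp [ee]

/-- The key root-of-unity sum. -/
lemma root_sum (n : ℕ) (m : ℤ) :
    ∑ j ∈ Finset.range (2 * n + 1), ee m (node n j)
      = if ((2 * n + 1 : ℤ)) ∣ m then ((2 * n + 1 : ℕ) : ℂ) else 0 := by
  have hN := hNc n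
  set ζ : ℂ := Complex.exp (m * (2 * π / (2 * n + 1)) * Complex.I) with hζ
  have hterm : ∀ j : ℕ, ee m (node n j) = ζ ^ j := by
    intro j
    rw [ee, hζ, ← Complex.exp_nat_mul]
    congr 1
    rw [node]
    push_cast
    field_simp
  have hζN : ζ ^ (2 * n + 1) = Complex.exp (m * (2 * π * Complex.I)) := by
    rw [hζ, ← Complex.exp_nat_mul]
    congr 1
    push_cast
    field_simp
  simp only [hterm]
  by_cases hdvd : ((2 * n + 1 : ℤ)) ∣ m
  · obtain ⟨t, rfl⟩ := hdvd
    have hζ1 : ζ = 1 := by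
      rw [hζ, Complex.exp_eq_one_iff]
      refine ⟨t, ?_⟩
      push_cast
      field_simp
    simp [hζ1]
  · have hζne : ζ ≠ 1 := by
      intro h1
      rw [hζ, Complex.exp_eq_one_iff] at h1
      obtain ⟨k, hk⟩ := h1
      apply hdvd
      have hI : (Complex.I : ℂ) ≠ 0 := Complex.I_ne_zero
      have hπ : (π : ℂ) ≠ 0 := by exact_mod_cast Complex.ofReal_ne_zero.2 Real.pi_ne_zero
      have hm : (m : ℂ) = (2 * (n:ℂ) + 1) * k := by
        field_simp at hk
        have h2πI : (2 * (π:ℂ) * Complex.I) ≠ 0 := by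
          simp [hπ, hI]
        apply mul_left_cancel₀ h2πI
        linear_combination (2 * (π:ℂ) * Complex.I) * hk
      refine ⟨k, ?_⟩
      exact_mod_cast hm
    have hgeom := geom_sum_eq hζne (2 * n + 1)
    rw [hgeom, hζN, if_neg hdvd, Complex.exp_int_mul_two_pi_mul_I]
    simp

def L (n k : ℕ) (x : ℝ) : ℝ :=
  (2 * (n : ℝ) + 1)⁻¹ * (1 + 2 * ∑ m ∈ Finset.Icc 1 n, Real.cos (m * (x - node n k)))

def Lc (n k : ℕ) (x : ℝ) : ℂ :=
  (2 * (n : ℂ) + 1)⁻¹ * ∑ m ∈ S n, ee m (x - node n k)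

lemma S_split (n : ℕ) (f : ℤ → ℂ) :
    ∑ m ∈ S n, f m = f 0 + ∑ m ∈ Finset.Icc 1 n, (f m + f (-(m : ℤ))) := by
  induction n with
  | zero => simp [S]
  | succ n ih =>
    have h1 : S (n + 1) = insert ((n : ℤ) + 1) (insert (-((n : ℤ) + 1)) (S n)) := by
      ext m; simp [S, Finset.mem_Icc]; omega
    have h2 : Finset.Icc 1 (n + 1) = insert (n + 1) (Finset.Icc 1 n) := by
      ext m; simp [Finset.mem_Icc]; omega
    have hn1 : ((n : ℤ) + 1) ∉ insert (-((n : ℤ) + 1)) (S n) := by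
      simp [S, Finset.mem_Icc]; omega
    have hn2 : (-((n : ℤ) + 1)) ∉ S n := by simp [S, Finset.mem_Icc]
    have hn3 : (n + 1) ∉ Finset.Icc 1 n := by simp
    rw [h1, h2, Finset.sum_insert hn1, Finset.sum_insert hn2, Finset.sum_insert hn3, ih]
    push_cast
    ring

lemma two_cos (m : ℕ) (θ : ℝ) :
    ee m θ + ee (-(m : ℤ)) θ = 2 * Complex.cos ((m : ℂ) * (θ : ℂ)) := by
  rw [Complex.two_cos, ee, ee]
  congr 2 <;> push_cast <;> ring

lemma Lc_eq (n k : ℕ) (x : ℝ) : ((L n k x : ℝ) : ℂ) = Lc n k x := by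
  rw [L, Lc, S_split n (fun m => ee m (x - node n k))]
  rw [show ee 0 (x - node n k) = 1 by simp [ee]]
  rw [Finset.sum_congr rfl (fun (m : ℕ) _ => two_cos m (x - node n k))]
  push_cast
  rw [Finset.mul_sum]

lemma L_trig (n k : ℕ) : IsTrigPoly n (L n k) := by
  set c : ℝ := (2 * (n : ℝ) + 1)⁻¹ with hc
  refine ⟨fun m => if m = 0 then c else c * 2 * Real.cos (m * node n k),
    fun m => c * 2 * Real.sin (m * node n k), fun x => ?_⟩
  have hterm : ∀ m ∈ Finset.Icc 1 n,
      ((if (m : ℕ) = 0 then c else c * 2 * Real.cos (m * node n k)) * Real.cos (m * x)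
        + c * 2 * Real.sin (m * node n k) * Real.sin (m * x))
      = c * 2 * Real.cos ((m : ℝ) * (x - node n k)) := by
    intro m hm
    rw [Finset.mem_Icc] at hm
    rw [if_neg (by omega)]
    rw [show (m : ℝ) * (x - node n k) = (m : ℝ) * x - (m : ℝ) * node n k by ring,
      Real.cos_sub]
    ring
  rw [Finset.sum_congr rfl hterm]
  rw [show (∑ m ∈ Finset.Icc 1 n, c * 2 * Real.cos ((m:ℝ) * (x - node n k)))
      = c * 2 * ∑ m ∈ Finset.Icc 1 n, Real.cos ((m:ℝ) * (x - node n k)) from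
    (Finset.mul_sum _ _ _).symm]
  show _ = (if (0:ℕ) = 0 then c else _) + _
  rw [L, if_pos rfl]
  ring


lemma sampling (n : ℕ) {m : ℤ} (hm : m ∈ S n) (x : ℝ) :
    ∑ j ∈ Finset.range (2 * n + 1), ee m (node n j) * Lc n j x = ee m x := by
  have hN := hNc n
  have step1 : ∀ j : ℕ, ee m (node n j) * Lc n j x
      = (2 * (n:ℂ) + 1)⁻¹ * ∑ m' ∈ S n, (ee m' x * ee (m - m') (node n j)) := by
    intro j
    rw [Lc, mul_left_comm, Finset.mul_sum]
    congr 1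
    refine Finset.sum_congr rfl (fun m' _ => ?_)
    rw [ee_sub m' x (node n j),
      show ee (m - m') (node n j) = ee m (node n j) * ee (-m') (node n j) by
        rw [← ee_add, sub_eq_add_neg]]
    ring
  rw [Finset.sum_congr rfl (fun j _ => step1 j), ← Finset.mul_sum, Finset.sum_comm]
  rw [Finset.sum_congr rfl (fun (m' : ℤ) (_ : m' ∈ S n) => by
    rw [← Finset.mul_sum, root_sum] :
    ∀ m' ∈ S n, (∑ j ∈ Finset.range (2 * n + 1), ee m' x * ee (m - m') (node n j))
      = ee m' x * (if ((2 * n + 1 : ℤ)) ∣ (m - m') then ((2 * n + 1 : ℕ) : ℂ) else 0))]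
  rw [Finset.sum_eq_single_of_mem m hm (fun b hb hbm => ?_)]
  · rw [sub_self, if_pos (dvd_zero _)]
    push_cast
    field_simp
  · rw [if_neg fun hdvd => hbm ?_, mul_zero]
    have h0 : m - b = 0 := by
      refine Int.eq_zero_of_abs_lt_dvd hdvd ?_
      simp only [S, Finset.mem_Icc] at hm hb
      rw [abs_lt]
      omega
    omega

lemma mem_S_zero (n : ℕ) : (0 : ℤ) ∈ S n := by simp [S, Finset.mem_Icc]

lemma mem_S_of (n : ℕ) {m : ℕ} (hm : m ∈ Finset.Icc 1 n) : ((m : ℤ)) ∈ S n := by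
  simp only [Finset.mem_Icc] at hm
  simp only [S, Finset.mem_Icc]
  omega

lemma mem_S_of_neg (n : ℕ) {m : ℕ} (hm : m ∈ Finset.Icc 1 n) : (-(m : ℤ)) ∈ S n := by
  simp only [Finset.mem_Icc] at hm
  simp only [S, Finset.mem_Icc]
  omega

lemma sum_L_one (n : ℕ) (x : ℝ) : ∑ j ∈ Finset.range (2 * n + 1), L n j x = 1 := by
  have h := sampling n (mem_S_zero n) x
  simp only [ee_zero, one_mul] at h
  have : ((∑ j ∈ Finset.range (2 * n + 1), L n j x : ℝ) : ℂ) = ((1 : ℝ) : ℂ) := by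
    push_cast
    rw [Finset.sum_congr rfl (fun j _ => Lc_eq n j x), h]
  exact_mod_cast this

lemma two_sin' (m : ℕ) (θ : ℝ) :
    ee m θ - ee (-(m : ℤ)) θ = 2 * Complex.sin ((m : ℂ) * (θ : ℂ)) * Complex.I := by
  have h := Complex.two_sin ((m : ℂ) * (θ : ℂ))
  have hI2 : Complex.I * Complex.I = -1 := Complex.I_mul_I
  have hre : ee m θ = Complex.exp (((m:ℂ) * θ) * Complex.I) := by
    rw [ee]; push_cast; ring_nf
  have hre' : ee (-(m : ℤ)) θ = Complex.exp ((-((m:ℂ) * θ)) * Complex.I) := by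
    rw [ee]; push_cast; ring_nf
  rw [hre, hre']
  linear_combination (-Complex.I) * h + (Complex.exp (((m:ℂ) * θ) * Complex.I)
      - Complex.exp (-((m:ℂ) * θ) * Complex.I)) * hI2

lemma cos_sampling (n : ℕ) {m : ℕ} (hm : m ∈ Finset.Icc 1 n) (x : ℝ) :
    ∑ j ∈ Finset.range (2 * n + 1), Real.cos (m * node n j) * L n j x = Real.cos (m * x) := by
  have h1 := sampling n (mem_S_of n hm) x
  have h2 := sampling n (mem_S_of_neg n hm) x
  have key : ∑ j ∈ Finset.range (2 * n + 1),
      (2 * Complex.cos ((m : ℂ) * (node n j : ℂ))) * Lc n j x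
      = 2 * Complex.cos ((m : ℂ) * (x : ℂ)) := by
    rw [Finset.sum_congr rfl (fun j _ => by rw [← two_cos, add_mul] :
      ∀ j ∈ Finset.range (2 * n + 1), (2 * Complex.cos ((m : ℂ) * (node n j : ℂ))) * Lc n j x
        = ee m (node n j) * Lc n j x + ee (-(m:ℤ)) (node n j) * Lc n j x)]
    rw [Finset.sum_add_distrib, h1, h2, two_cos]
  have : ((∑ j ∈ Finset.range (2 * n + 1), Real.cos (m * node n j) * L n j x : ℝ) : ℂ)
      = ((Real.cos (m * x) : ℝ) : ℂ) := by
    have h2' : (2 : ℂ) ≠ 0 := two_ne_zero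
    apply mul_left_cancel₀ h2'
    push_cast
    calc 2 * ∑ j ∈ Finset.range (2 * n + 1),
          Complex.cos ((m:ℂ) * (node n j : ℂ)) * ((L n j x : ℝ) : ℂ)
        = ∑ j ∈ Finset.range (2 * n + 1),
          (2 * Complex.cos ((m : ℂ) * (node n j : ℂ))) * Lc n j x := by
          rw [Finset.mul_sum]
          exact Finset.sum_congr rfl (fun j _ => by rw [Lc_eq]; ring)
      _ = 2 * Complex.cos ((m : ℂ) * (x : ℂ)) := key
  exact_mod_cast this

lemma sin_sampling (n : ℕ) {m : ℕ} (hm : m ∈ Finset.Icc 1 n) (x : ℝ) :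
    ∑ j ∈ Finset.range (2 * n + 1), Real.sin (m * node n j) * L n j x = Real.sin (m * x) := by
  have h1 := sampling n (mem_S_of n hm) x
  have h2 := sampling n (mem_S_of_neg n hm) x
  have key : ∑ j ∈ Finset.range (2 * n + 1),
      (2 * Complex.sin ((m : ℂ) * (node n j : ℂ)) * Complex.I) * Lc n j x
      = 2 * Complex.sin ((m : ℂ) * (x : ℂ)) * Complex.I := by
    rw [Finset.sum_congr rfl (fun j _ => by rw [← two_sin', sub_mul] :
      ∀ j ∈ Finset.range (2 * n + 1),
        (2 * Complex.sin ((m : ℂ) * (node n j : ℂ)) * Complex.I) * Lc n j x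
        = ee m (node n j) * Lc n j x - ee (-(m:ℤ)) (node n j) * Lc n j x)]
    rw [Finset.sum_sub_distrib, h1, h2, two_sin']
  have : ((∑ j ∈ Finset.range (2 * n + 1), Real.sin (m * node n j) * L n j x : ℝ) : ℂ)
      = ((Real.sin (m * x) : ℝ) : ℂ) := by
    have h2' : (2 * Complex.I : ℂ) ≠ 0 := by simp [Complex.I_ne_zero]
    apply mul_left_cancel₀ h2'
    push_cast
    calc 2 * Complex.I * ∑ j ∈ Finset.range (2 * n + 1),
          Complex.sin ((m:ℂ) * (node n j : ℂ)) * ((L n j x : ℝ) : ℂ)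
        = ∑ j ∈ Finset.range (2 * n + 1),
          (2 * Complex.sin ((m : ℂ) * (node n j : ℂ)) * Complex.I) * Lc n j x := by
          rw [Finset.mul_sum]
          exact Finset.sum_congr rfl (fun j _ => by rw [Lc_eq]; ring)
      _ = 2 * Complex.sin ((m : ℂ) * (x : ℂ)) * Complex.I := key
      _ = 2 * Complex.I * Complex.sin ((m : ℂ) * (x : ℂ)) := by ring
  exact_mod_cast this

lemma interp_eq (n : ℕ) {f : ℝ → ℝ} (hf : IsTrigPoly n f) (x : ℝ) :
    ∑ j ∈ Finset.range (2 * n + 1), f (node n j) * L n j x = f x := by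
  obtain ⟨a, b, hab⟩ := hf
  have step : ∀ j ∈ Finset.range (2 * n + 1), f (node n j) * L n j x
      = a 0 * L n j x + ∑ m ∈ Finset.Icc 1 n,
          (a m * (Real.cos (m * node n j) * L n j x)
            + b m * (Real.sin (m * node n j) * L n j x)) := by
    intro j _
    rw [hab (node n j), add_mul, Finset.sum_mul]
    congr 1
    exact Finset.sum_congr rfl fun m _ => by ring
  rw [Finset.sum_congr rfl step, Finset.sum_add_distrib, ← Finset.mul_sum, sum_L_one,
    Finset.sum_comm, hab x, mul_one]
  congr 1
  refine Finset.sum_congr rfl fun m hm => ?_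
  rw [Finset.sum_add_distrib, ← Finset.mul_sum, ← Finset.mul_sum,
    cos_sampling n hm, sin_sampling n hm]

def T2 (n : ℕ) : Finset (ℤ × ℤ) := S n ×ˢ S n
def T3 (n : ℕ) : Finset ((ℤ × ℤ) × ℤ) := T2 n ×ˢ S n
def T4 (n : ℕ) : Finset (((ℤ × ℤ) × ℤ) × ℤ) := T3 n ×ˢ S n

def σ2 (t : ℤ × ℤ) : ℤ := t.1 + t.2
def σ3 (t : (ℤ × ℤ) × ℤ) : ℤ := σ2 t.1 + t.2
def σ4 (t : ((ℤ × ℤ) × ℤ) × ℤ) : ℤ := σ3 t.1 + t.2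

lemma pow2_expand (n : ℕ) (θ : ℝ) :
    (∑ m ∈ S n, ee m θ) ^ 2 = ∑ t ∈ T2 n, ee (σ2 t) θ := by
  rw [sq, Finset.sum_mul_sum, T2, Finset.sum_product]
  exact Finset.sum_congr rfl fun a _ => Finset.sum_congr rfl fun b _ => (ee_add a b θ).symm

lemma pow3_expand (n : ℕ) (θ : ℝ) :
    (∑ m ∈ S n, ee m θ) ^ 3 = ∑ t ∈ T3 n, ee (σ3 t) θ := by
  rw [pow_succ, pow2_expand, Finset.sum_mul_sum, T3, Finset.sum_product]
  exact Finset.sum_congr rfl fun a _ => Finset.sum_congr rfl fun b _ => (ee_add (σ2 a) b θ).symm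

lemma pow4_expand (n : ℕ) (θ : ℝ) :
    (∑ m ∈ S n, ee m θ) ^ 4 = ∑ t ∈ T4 n, ee (σ4 t) θ := by
  rw [pow_succ, pow3_expand, Finset.sum_mul_sum, T4, Finset.sum_product]
  exact Finset.sum_congr rfl fun a _ => Finset.sum_congr rfl fun b _ => (ee_add (σ3 a) b θ).symm

lemma abs_σ3_le {n : ℕ} {t : (ℤ × ℤ) × ℤ} (ht : t ∈ T3 n) : |σ3 t| ≤ 4 * n := by
  simp only [T3, T2, S, Finset.mem_product, Finset.mem_Icc] at ht
  rw [abs_le, σ3, σ2]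
  omega

lemma abs_σ4_le {n : ℕ} {t : ((ℤ × ℤ) × ℤ) × ℤ} (ht : t ∈ T4 n) : |σ4 t| ≤ 4 * n := by
  simp only [T4, T3, T2, S, Finset.mem_product, Finset.mem_Icc] at ht
  rw [abs_le, σ4, σ3, σ2]
  omega

lemma tri3 {n : ℕ} {M : ℤ} (h : (2 * (n : ℤ) + 1) ∣ M) (hb : |M| ≤ 4 * n) :
    M = 0 ∨ M = 2 * (n : ℤ) + 1 ∨ M = -(2 * (n : ℤ) + 1) := by
  obtain ⟨t, rfl⟩ := h
  rw [abs_mul, abs_of_nonneg (by omega : (0:ℤ) ≤ 2 * (n:ℤ) + 1)] at hb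
  have ht : |t| ≤ 1 := by nlinarith [abs_nonneg t]
  rw [abs_le] at ht
  rcases (by omega : t = 0 ∨ t = 1 ∨ t = -1) with rfl | rfl | rfl
  · left; ring
  · right; left; ring
  · right; right; ring

lemma node_sum (n : ℕ) (x : ℝ) (M : ℤ) :
    ∑ k ∈ Finset.range (2 * n + 1), ee M (x - node n k)
      = ee M x * (if (2 * (n : ℤ) + 1) ∣ M then ((2 * n + 1 : ℕ) : ℂ) else 0) := by
  rw [Finset.sum_congr rfl fun k _ => ee_sub M x (node n k), ← Finset.mul_sum, root_sum]
  congr 1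
  simp only [dvd_neg]

lemma classify (n : ℕ) (x : ℝ) {M : ℤ} (hb : |M| ≤ 4 * n) :
    ee M x * (if (2 * (n : ℤ) + 1) ∣ M then ((2 * n + 1 : ℕ) : ℂ) else 0)
      = ((2 * n + 1 : ℕ) : ℂ) *
        ((if M = 0 then 1 else 0) + (if M = 2 * (n : ℤ) + 1 then 1 else 0) * ee (2 * (n : ℤ) + 1) x
          + (if M = -(2 * (n : ℤ) + 1) then 1 else 0) * ee (-(2 * (n : ℤ) + 1)) x) := by
  by_cases h : (2 * (n : ℤ) + 1) ∣ M
  · rcases tri3 h hb with rfl | rfl | rfl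
    · rw [if_pos h, if_pos rfl, if_neg (by omega), if_neg (by omega), ee_zero]
      ring
    · rw [if_pos h, if_neg (by omega), if_pos rfl, if_neg (by omega)]
      ring
    · rw [if_pos h, if_neg (by omega), if_neg (by omega), if_pos rfl]
      ring
  · have h0 : M ≠ 0 := fun e => h (by rw [e]; exact dvd_zero _)
    have hP : M ≠ 2 * (n : ℤ) + 1 := fun e => h (by rw [e])
    have hQ : M ≠ -(2 * (n : ℤ) + 1) := fun e => h (by rw [e]; exact (dvd_neg).2 (dvd_refl _))
    rw [if_neg h, if_neg h0, if_neg hP, if_neg hQ]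
    ring

def CC3 (n : ℕ) (v : ℤ) : ℕ := ∑ t ∈ T3 n, if σ3 t = v then 1 else 0
def CC4 (n : ℕ) (v : ℤ) : ℕ := ∑ t ∈ T4 n, if σ4 t = v then 1 else 0

lemma CC3_cast (n : ℕ) (v : ℤ) :
    ((CC3 n v : ℕ) : ℂ) = ∑ t ∈ T3 n, if σ3 t = v then (1 : ℂ) else 0 := by
  rw [CC3]
  push_cast
  rfl

lemma CC4_cast (n : ℕ) (v : ℤ) :
    ((CC4 n v : ℕ) : ℂ) = ∑ t ∈ T4 n, if σ4 t = v then (1 : ℂ) else 0 := by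
  rw [CC4]
  push_cast
  rfl

lemma key3 (n : ℕ) (x : ℝ) :
    ∑ k ∈ Finset.range (2 * n + 1), (Lc n k x) ^ 3
      = ((2 * (n : ℂ) + 1)⁻¹) ^ 2 * ((CC3 n 0 : ℂ)
          + (CC3 n (2 * (n : ℤ) + 1) : ℂ) * ee (2 * (n : ℤ) + 1) x
          + (CC3 n (-(2 * (n : ℤ) + 1)) : ℂ) * ee (-(2 * (n : ℤ) + 1)) x) := by
  have hN := hNc n
  have hNN : ((2 * n + 1 : ℕ) : ℂ) = 2 * (n : ℂ) + 1 := by push_cast; ring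
  calc ∑ k ∈ Finset.range (2 * n + 1), (Lc n k x) ^ 3
      = ((2 * (n : ℂ) + 1)⁻¹) ^ 3
          * ∑ k ∈ Finset.range (2 * n + 1), ∑ t ∈ T3 n, ee (σ3 t) (x - node n k) := by
        rw [Finset.mul_sum]
        exact Finset.sum_congr rfl fun k _ => by rw [Lc, mul_pow, pow3_expand]
    _ = ((2 * (n : ℂ) + 1)⁻¹) ^ 3
          * ∑ t ∈ T3 n, ∑ k ∈ Finset.range (2 * n + 1), ee (σ3 t) (x - node n k) := by
        rw [Finset.sum_comm]
    _ = ((2 * (n : ℂ) + 1)⁻¹) ^ 3 * ∑ t ∈ T3 n, ((2 * n + 1 : ℕ) : ℂ)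
          * ((if σ3 t = 0 then 1 else 0)
            + (if σ3 t = 2 * (n : ℤ) + 1 then 1 else 0) * ee (2 * (n : ℤ) + 1) x
            + (if σ3 t = -(2 * (n : ℤ) + 1) then 1 else 0) * ee (-(2 * (n : ℤ) + 1)) x) := by
        congr 1
        exact Finset.sum_congr rfl fun t ht => by
          rw [node_sum, classify n x (abs_σ3_le ht)]
    _ = ((2 * (n : ℂ) + 1)⁻¹) ^ 3 * (((2 * n + 1 : ℕ) : ℂ)
          * ((∑ t ∈ T3 n, if σ3 t = 0 then (1:ℂ) else 0)
            + (∑ t ∈ T3 n, if σ3 t = 2 * (n : ℤ) + 1 then (1:ℂ) else 0) * ee (2 * (n : ℤ) + 1) x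
            + (∑ t ∈ T3 n, if σ3 t = -(2 * (n : ℤ) + 1) then (1:ℂ) else 0)
                * ee (-(2 * (n : ℤ) + 1)) x)) := by
        rw [← Finset.mul_sum]
        congr 1
        rw [Finset.sum_add_distrib, Finset.sum_add_distrib, ← Finset.sum_mul, ← Finset.sum_mul]
    _ = ((2 * (n : ℂ) + 1)⁻¹) ^ 2 * ((CC3 n 0 : ℂ)
          + (CC3 n (2 * (n : ℤ) + 1) : ℂ) * ee (2 * (n : ℤ) + 1) x
          + (CC3 n (-(2 * (n : ℤ) + 1)) : ℂ) * ee (-(2 * (n : ℤ) + 1)) x) := by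
        rw [CC3_cast, CC3_cast, CC3_cast, hNN]
        field_simp

lemma key4 (n : ℕ) (x : ℝ) :
    ∑ k ∈ Finset.range (2 * n + 1), (Lc n k x) ^ 4
      = ((2 * (n : ℂ) + 1)⁻¹) ^ 3 * ((CC4 n 0 : ℂ)
          + (CC4 n (2 * (n : ℤ) + 1) : ℂ) * ee (2 * (n : ℤ) + 1) x
          + (CC4 n (-(2 * (n : ℤ) + 1)) : ℂ) * ee (-(2 * (n : ℤ) + 1)) x) := by
  have hN := hNc n
  have hNN : ((2 * n + 1 : ℕ) : ℂ) = 2 * (n : ℂ) + 1 := by push_cast; ring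
  calc ∑ k ∈ Finset.range (2 * n + 1), (Lc n k x) ^ 4
      = ((2 * (n : ℂ) + 1)⁻¹) ^ 4
          * ∑ k ∈ Finset.range (2 * n + 1), ∑ t ∈ T4 n, ee (σ4 t) (x - node n k) := by
        rw [Finset.mul_sum]
        exact Finset.sum_congr rfl fun k _ => by rw [Lc, mul_pow, pow4_expand]
    _ = ((2 * (n : ℂ) + 1)⁻¹) ^ 4
          * ∑ t ∈ T4 n, ∑ k ∈ Finset.range (2 * n + 1), ee (σ4 t) (x - node n k) := by
        rw [Finset.sum_comm]
    _ = ((2 * (n : ℂ) + 1)⁻¹) ^ 4 * ∑ t ∈ T4 n, ((2 * n + 1 : ℕ) : ℂ)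
          * ((if σ4 t = 0 then 1 else 0)
            + (if σ4 t = 2 * (n : ℤ) + 1 then 1 else 0) * ee (2 * (n : ℤ) + 1) x
            + (if σ4 t = -(2 * (n : ℤ) + 1) then 1 else 0) * ee (-(2 * (n : ℤ) + 1)) x) := by
        congr 1
        exact Finset.sum_congr rfl fun t ht => by
          rw [node_sum, classify n x (abs_σ4_le ht)]
    _ = ((2 * (n : ℂ) + 1)⁻¹) ^ 4 * (((2 * n + 1 : ℕ) : ℂ)
          * ((∑ t ∈ T4 n, if σ4 t = 0 then (1:ℂ) else 0)
            + (∑ t ∈ T4 n, if σ4 t = 2 * (n : ℤ) + 1 then (1:ℂ) else 0) * ee (2 * (n : ℤ) + 1) x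
            + (∑ t ∈ T4 n, if σ4 t = -(2 * (n : ℤ) + 1) then (1:ℂ) else 0)
                * ee (-(2 * (n : ℤ) + 1)) x)) := by
        rw [← Finset.mul_sum]
        congr 1
        rw [Finset.sum_add_distrib, Finset.sum_add_distrib, ← Finset.sum_mul, ← Finset.sum_mul]
    _ = ((2 * (n : ℂ) + 1)⁻¹) ^ 3 * ((CC4 n 0 : ℂ)
          + (CC4 n (2 * (n : ℤ) + 1) : ℂ) * ee (2 * (n : ℤ) + 1) x
          + (CC4 n (-(2 * (n : ℤ) + 1)) : ℂ) * ee (-(2 * (n : ℤ) + 1)) x) := by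
        rw [CC4_cast, CC4_cast, CC4_cast, hNN]
        field_simp

def CC2 (n : ℕ) (v : ℤ) : ℕ := ∑ t ∈ T2 n, if σ2 t = v then 1 else 0

lemma CC2_eq (n : ℕ) (v : ℤ) : ((CC2 n v : ℕ) : ℤ) = max (2 * (n : ℤ) + 1 - |v|) 0 := by
  rw [CC2, T2, Finset.sum_product]
  have h1 : ∀ a ∈ S n, (∑ b ∈ S n, if σ2 (a, b) = v then (1:ℕ) else 0)
      = if v - a ∈ S n then 1 else 0 := by
    intro a _
    rw [Finset.sum_congr rfl (fun b _ =>
      if_congr (show (σ2 (a, b) = v) ↔ (b = v - a) by simp only [σ2]; omega) rfl rfl)]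
    exact Finset.sum_ite_eq' (S n) (v - a) (fun _ => 1)
  rw [Finset.sum_congr rfl h1, Finset.sum_boole]
  have h2 : (S n).filter (fun a => v - a ∈ S n)
      = Finset.Icc (max (-(n:ℤ)) (v - n)) (min (n:ℤ) (v + n)) := by
    ext b
    simp only [S, Finset.mem_Icc, Finset.mem_filter]
    omega
  rw [h2, Int.card_Icc]
  push_cast
  rcases le_or_gt 0 v with h | h
  · rw [abs_of_nonneg h]; omega
  · rw [abs_of_neg h]; omega

lemma CC3_rec (n : ℕ) (v : ℤ) : CC3 n v = ∑ b ∈ S n, CC2 n (v - b) := by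
  rw [CC3, T3, Finset.sum_product, Finset.sum_comm]
  refine Finset.sum_congr rfl fun b _ => ?_
  rw [CC2]
  refine Finset.sum_congr rfl fun a _ => ?_
  exact if_congr (show (σ3 (a, b) = v) ↔ (σ2 a = v - b) by simp only [σ3]; omega) rfl rfl

lemma CC4_rec (n : ℕ) (v : ℤ) : CC4 n v = ∑ b ∈ S n, CC3 n (v - b) := by
  rw [CC4, T4, Finset.sum_product, Finset.sum_comm]
  refine Finset.sum_congr rfl fun b _ => ?_
  rw [CC3]
  refine Finset.sum_congr rfl fun a _ => ?_
  exact if_congr (show (σ4 (a, b) = v) ↔ (σ3 a = v - b) by simp only [σ4]; omega) rfl rfl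

lemma CC2_even (n : ℕ) (v : ℤ) : CC2 n (-v) = CC2 n v := by
  have h := CC2_eq n (-v)
  rw [abs_neg, ← CC2_eq n v] at h
  exact_mod_cast h

lemma sum_neg_S (n : ℕ) {M : Type*} [AddCommMonoid M] (f : ℤ → M) :
    ∑ b ∈ S n, f (-b) = ∑ b ∈ S n, f b := by
  refine Finset.sum_nbij' (fun b => -b) (fun b => -b) ?_ ?_ ?_ ?_ ?_ <;>
    simp [S, Finset.mem_Icc] <;> omega

lemma CC3_even (n : ℕ) (v : ℤ) : CC3 n (-v) = CC3 n v := by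
  rw [CC3_rec, CC3_rec, ← sum_neg_S n (fun b => CC2 n (v - b))]
  refine Finset.sum_congr rfl fun b _ => ?_
  rw [show -v - b = -(v - -b) by ring, CC2_even]

lemma CC4_even (n : ℕ) (v : ℤ) : CC4 n (-v) = CC4 n v := by
  rw [CC4_rec, CC4_rec, ← sum_neg_S n (fun b => CC3 n (v - b))]
  refine Finset.sum_congr rfl fun b _ => ?_
  rw [show -v - b = -(v - -b) by ring, CC3_even]

lemma gauss1 : ∀ v : ℤ, 0 ≤ v → 2 * ∑ a ∈ Finset.Icc (0:ℤ) v, a = v * (v + 1) := by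
  refine Int.le_induction ?_ ?_
  · simp
  · intro v hv ih
    have hins : Finset.Icc (0:ℤ) (v+1) = insert (v+1) (Finset.Icc (0:ℤ) v) := by
      ext a; simp only [Finset.mem_Icc, Finset.mem_insert]; omega
    have hnm : (v+1) ∉ Finset.Icc (0:ℤ) v := by simp
    rw [hins, Finset.sum_insert hnm]
    linear_combination ih

lemma gauss2 : ∀ v : ℤ, 0 ≤ v →
    6 * ∑ a ∈ Finset.Icc (0:ℤ) v, a ^ 2 = v * (v + 1) * (2 * v + 1) := by
  refine Int.le_induction ?_ ?_
  · simp
  · intro v hv ih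
    have hins : Finset.Icc (0:ℤ) (v+1) = insert (v+1) (Finset.Icc (0:ℤ) v) := by
      ext a; simp only [Finset.mem_Icc, Finset.mem_insert]; omega
    have hnm : (v+1) ∉ Finset.Icc (0:ℤ) v := by simp
    rw [hins, Finset.sum_insert hnm]
    linear_combination ih

lemma sum_max_S (n : ℕ) {l : ℤ} (hl : l ≤ 0) {u : ℤ} (hu : 0 ≤ u) :
    ∑ a ∈ Finset.Icc l u, max a 0 = ∑ a ∈ Finset.Icc (0:ℤ) u, a := by
  rw [← Finset.sum_subset (Finset.Icc_subset_Icc hl le_rfl)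
    (fun x _ hx => by
      have : x < 0 := by
        simp only [Finset.mem_Icc] at *
        omega
      simp [max_eq_right (le_of_lt this)])]
  exact Finset.sum_congr rfl fun a ha => by
    simp only [Finset.mem_Icc] at ha
    exact max_eq_left ha.1

lemma CC3_top (n : ℕ) : 2 * (CC3 n (2 * (n : ℤ) + 1) : ℤ) = n * (n + 1) := by
  have h1 : ((CC3 n (2 * (n : ℤ) + 1) : ℕ) : ℤ) = ∑ b ∈ S n, max b 0 := by
    rw [CC3_rec]
    push_cast
    refine Finset.sum_congr rfl fun b hb => ?_
    simp only [S, Finset.mem_Icc] at hb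
    rw [CC2_eq, abs_of_nonneg (by omega : (0:ℤ) ≤ 2 * (n:ℤ) + 1 - b)]
    omega
  rw [h1, S, sum_max_S n (by omega) (by positivity), gauss1 n (by positivity)]

lemma CC4_top (n : ℕ) : 12 * (CC4 n (2 * (n : ℤ) + 1) : ℤ) = 8 * n * (n + 1) * (2 * n + 1) := by
  have hCC3v : ∀ b ∈ S n, ((CC3 n (2 * (n : ℤ) + 1 - b) : ℕ) : ℤ) = ∑ b' ∈ S n, max (b + b') 0 := by
    intro b hb
    simp only [S, Finset.mem_Icc] at hb
    rw [CC3_rec]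
    push_cast
    refine Finset.sum_congr rfl fun b' hb' => ?_
    simp only [S, Finset.mem_Icc] at hb'
    rw [CC2_eq, abs_of_nonneg (by omega : (0:ℤ) ≤ 2 * (n:ℤ) + 1 - b - b')]
    omega
  have hinner : ∀ b ∈ S n, 2 * ∑ b' ∈ S n, max (b + b') 0 = (b + n) * (b + n + 1) := by
    intro b hb
    simp only [S, Finset.mem_Icc] at hb
    have hshift : ∑ b' ∈ S n, max (b + b') 0 = ∑ c ∈ Finset.Icc (b - n) (b + n), max c 0 := by
      refine Finset.sum_nbij' (fun b' => b + b') (fun c => c - b) ?_ ?_ ?_ ?_ ?_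
      · intro a ha; simp only [S, Finset.mem_Icc] at ha ⊢; omega
      · intro a ha; simp only [S, Finset.mem_Icc] at ha ⊢; omega
      · intro a _; omega
      · intro a _; omega
      · intro a _; rfl
    rw [hshift, sum_max_S n (by omega) (by omega), gauss1 _ (by omega)]
  have h2 : 2 * ((CC4 n (2 * (n : ℤ) + 1) : ℕ) : ℤ) = ∑ u ∈ Finset.Icc (0:ℤ) (2 * n), u * (u + 1) := by
    rw [CC4_rec]
    push_cast
    rw [Finset.mul_sum, Finset.sum_congr rfl (fun b hb => by
      rw [hCC3v b hb, hinner b hb] :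
      ∀ b ∈ S n, 2 * ((CC3 n (2 * (n : ℤ) + 1 - b) : ℕ) : ℤ) = (b + n) * (b + n + 1))]
    refine Finset.sum_nbij' (fun b => b + n) (fun u => u - n) ?_ ?_ ?_ ?_ ?_
    · intro a ha; simp only [S, Finset.mem_Icc] at ha ⊢; omega
    · intro a ha; simp only [S, Finset.mem_Icc] at ha ⊢; omega
    · intro a _; omega
    · intro a _; omega
    · intro a ha; dsimp only
  have h3 := gauss1 (2 * n) (by positivity)
  have h4 := gauss2 (2 * n) (by positivity)
  have h5 : ∑ u ∈ Finset.Icc (0:ℤ) (2 * n), u * (u + 1)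
      = (∑ a ∈ Finset.Icc (0:ℤ) (2 * n), a ^ 2) + ∑ a ∈ Finset.Icc (0:ℤ) (2 * n), a := by
    rw [← Finset.sum_add_distrib]
    exact Finset.sum_congr rfl fun a _ => by ring
  have h6 : 12 * ((CC4 n (2 * (n : ℤ) + 1) : ℕ) : ℤ) = 6 * ((∑ a ∈ Finset.Icc (0:ℤ) (2 * n), a ^ 2) + ∑ a ∈ Finset.Icc (0:ℤ) (2 * n), a) := by
    rw [← h5]
    linarith
  rw [h6]
  push_cast at h3 h4 ⊢
  linarith

lemma ratio (n : ℕ) : 16 * (2 * (n:ℤ) + 1) * (CC3 n (2 * (n : ℤ) + 1) : ℤ)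
    = 12 * (CC4 n (2 * (n : ℤ) + 1) : ℤ) := by
  have h3 := CC3_top n
  have h4 := CC4_top n
  linear_combination 8 * (2 * (n:ℤ) + 1) * h3 - h4

lemma hbeta (n : ℕ) :
    4 * ((2 * (n:ℂ) + 1)⁻¹) ^ 2 * (CC3 n (2 * (n : ℤ) + 1) : ℂ)
      = 3 * ((2 * (n:ℂ) + 1)⁻¹) ^ 3 * (CC4 n (2 * (n : ℤ) + 1) : ℂ) := by
  have hN := hNc n
  have hr : 16 * (2 * (n:ℂ) + 1) * (CC3 n (2 * (n : ℤ) + 1) : ℂ)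
      = 12 * (CC4 n (2 * (n : ℤ) + 1) : ℂ) := by exact_mod_cast ratio n
  field_simp
  linear_combination (1 / 4 : ℂ) * hr

lemma Gconst (n : ℕ) (x y : ℝ) :
    ∑ k ∈ Finset.range (2 * n + 1), (4 * (Lc n k x) ^ 3 - 3 * (Lc n k x) ^ 4)
      = ∑ k ∈ Finset.range (2 * n + 1), (4 * (Lc n k y) ^ 3 - 3 * (Lc n k y) ^ 4) := by
  have expand : ∀ z : ℝ,
      ∑ k ∈ Finset.range (2 * n + 1), (4 * (Lc n k z) ^ 3 - 3 * (Lc n k z) ^ 4)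
        = 4 * (((2 * (n : ℂ) + 1)⁻¹) ^ 2 * ((CC3 n 0 : ℂ)
            + (CC3 n (2 * (n : ℤ) + 1) : ℂ) * ee (2 * (n : ℤ) + 1) z
            + (CC3 n (2 * (n : ℤ) + 1) : ℂ) * ee (-(2 * (n : ℤ) + 1)) z))
          - 3 * (((2 * (n : ℂ) + 1)⁻¹) ^ 3 * ((CC4 n 0 : ℂ)
            + (CC4 n (2 * (n : ℤ) + 1) : ℂ) * ee (2 * (n : ℤ) + 1) z
            + (CC4 n (2 * (n : ℤ) + 1) : ℂ) * ee (-(2 * (n : ℤ) + 1)) z)) := by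
    intro z
    rw [Finset.sum_sub_distrib, ← Finset.mul_sum, ← Finset.mul_sum, key3, key4,
      CC3_even, CC4_even]
  rw [expand x, expand y]
  have hb := hbeta n
  linear_combination (ee (2 * (n : ℤ) + 1) x + ee (-(2 * (n : ℤ) + 1)) x
    - ee (2 * (n : ℤ) + 1) y - ee (-(2 * (n : ℤ) + 1)) y) * hb

lemma real_const (n : ℕ) (x y : ℝ) :
    ∑ k ∈ Finset.range (2 * n + 1), (4 * (L n k x) ^ 3 - 3 * (L n k x) ^ 4)
      = ∑ k ∈ Finset.range (2 * n + 1), (4 * (L n k y) ^ 3 - 3 * (L n k y) ^ 4) := by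
  have hx : ∀ z : ℝ, ((∑ k ∈ Finset.range (2 * n + 1),
      (4 * (L n k z) ^ 3 - 3 * (L n k z) ^ 4) : ℝ) : ℂ)
      = ∑ k ∈ Finset.range (2 * n + 1), (4 * (Lc n k z) ^ 3 - 3 * (Lc n k z) ^ 4) := by
    intro z
    push_cast
    exact Finset.sum_congr rfl fun k _ => by rw [Lc_eq]
  have := (hx x).trans ((Gconst n x y).trans (hx y).symm)
  exact_mod_cast this

end TrigAux

end


/-- For the fundamental functions `ℓ k` of trigonometric interpolation at the
equidistant nodes `x k = 2kπ/(2n+1)`, `k = 0,…,2n`, the identity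
`∑ k, (4 ℓ k x ^ 3 - 3 ℓ k x ^ 4) = 1` holds for all real `x`. -/
theorem sum_fundamental_identity (n : ℕ) (hn : 1 ≤ n)
    (ℓ : Fin (2 * n + 1) → ℝ → ℝ)
    (htrig : ∀ k, IsTrigPoly n (ℓ k))
    (hinterp : ∀ k j : Fin (2 * n + 1),
      ℓ k (2 * (j : ℕ) * π / (2 * n + 1)) = if j = k then 1 else 0)
    (x : ℝ) :
    ∑ k : Fin (2 * n + 1), (4 * (ℓ k x) ^ 3 - 3 * (ℓ k x) ^ 4) = 1 := by
  classical
  have hL : ∀ (k : Fin (2 * n + 1)) (y : ℝ), ℓ k y = TrigAux.L n (k : ℕ) y := by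
    intro k y
    have h := TrigAux.interp_eq n (htrig k) y
    rw [← h]
    have hstep : ∀ j ∈ Finset.range (2 * n + 1),
        ℓ k (TrigAux.node n j) * TrigAux.L n j y
          = (if j = (k : ℕ) then TrigAux.L n j y else 0) := by
      intro j hj
      rw [Finset.mem_range] at hj
      have hv := hinterp k ⟨j, hj⟩
      have harg : (2 * ((⟨j, hj⟩ : Fin (2 * n + 1)) : ℕ) * π / (2 * n + 1) : ℝ)
          = TrigAux.node n j := by
        rw [TrigAux.node]
      rw [harg] at hv
      rw [hv]
      by_cases hc : (⟨j, hj⟩ : Fin (2 * n + 1)) = k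
      · rw [if_pos hc, if_pos (by rw [← hc]), one_mul]
      · rw [if_neg hc, if_neg (fun e => hc (Fin.ext (by simpa using e))), zero_mul]
    rw [Finset.sum_congr rfl hstep, Finset.sum_ite_eq' (Finset.range (2 * n + 1)) (k : ℕ)
      (fun j => TrigAux.L n j y), if_pos (Finset.mem_range.2 k.isLt)]
  have hgoal1 : ∑ k : Fin (2 * n + 1), (4 * (ℓ k x) ^ 3 - 3 * (ℓ k x) ^ 4)
      = ∑ j ∈ Finset.range (2 * n + 1),
          (4 * (TrigAux.L n j x) ^ 3 - 3 * (TrigAux.L n j x) ^ 4) := by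
    rw [← Fin.sum_univ_eq_sum_range
      (fun j => 4 * (TrigAux.L n j x) ^ 3 - 3 * (TrigAux.L n j x) ^ 4) (2 * n + 1)]
    exact Finset.sum_congr rfl fun k _ => by rw [hL k x]
  have hval : ∀ j ∈ Finset.range (2 * n + 1),
      (4 * (TrigAux.L n j 0) ^ 3 - 3 * (TrigAux.L n j 0) ^ 4)
        = (if j = 0 then (1 : ℝ) else 0) := by
    intro j hj
    rw [Finset.mem_range] at hj
    have h0 : TrigAux.L n j 0 = if j = 0 then (1:ℝ) else 0 := by
      rw [← hL ⟨j, hj⟩ 0]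
      have hv := hinterp ⟨j, hj⟩ (0 : Fin (2 * n + 1))
      have harg : (2 * (((0 : Fin (2 * n + 1))) : ℕ) * π / (2 * n + 1) : ℝ) = 0 := by
        simp [Fin.val_zero]
      rw [harg] at hv
      rw [hv]
      by_cases hc : j = 0
      · rw [if_pos hc, if_pos (Fin.ext (by simp [hc]))]
      · rw [if_neg hc, if_neg (fun e => hc (by simpa using (Fin.ext_iff.1 e).symm))]
    rw [h0]
    split_ifs with hc <;> norm_num
  rw [hgoal1, TrigAux.real_const n x 0, Finset.sum_congr rfl hval,
    Finset.sum_ite_eq' (Finset.range (2 * n + 1)) 0 (fun _ => (1:ℝ)),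
    if_pos (Finset.mem_range.2 (by omega))]
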